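/- If ν, λ : ℝ → ℝ are differentiable on (0, R₀) with ν twice differentiable, and ν satisfies both the vanishing complexity equation ν'(r)·(r·λ'(r) − r·ν'(r) + 2) − 2r·ν''(r) = 0 and the Karmarkar equation 2ν''(r) + (ν'(r))² = ν'(r)·λ'(r)·e^{λ(r)}/(e^{λ(r)} − 1) on (0, R₀), with ν'(r) ≠ 0 and e^{λ(r)} > 1 for all r in (0, R₀), then λ satisfies r·λ'(r)/(e^{λ(r)} − 1) = 2 on (0, R₀). -/
import Mathlib


open Real Set

theorem vanishing_complexity_and_karmarkar_imply_lambda_ode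
    (R₀ : ℝ) (hR₀ : 0 < R₀) (f g : ℝ → ℝ)
    (hf : DifferentiableOn ℝ f (Ioo 0 R₀))
    (hf' : DifferentiableOn ℝ (deriv f) (Ioo 0 R₀))
    (hg : DifferentiableOn ℝ g (Ioo 0 R₀))
    (hVC : ∀ r ∈ Ioo 0 R₀,
      deriv f r * (r * deriv g r - r * deriv f r + 2) - 2 * r * deriv (deriv f) r = 0)
    (hK : ∀ r ∈ Ioo 0 R₀,
      2 * deriv (deriv f) r + (deriv f r) ^ 2
        = deriv f r * deriv g r * Real.exp (g r) / (Real.exp (g r) - 1))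
    (hf'ne : ∀ r ∈ Ioo 0 R₀, deriv f r ≠ 0)
    (hgt : ∀ r ∈ Ioo 0 R₀, 1 < Real.exp (g r)) :
    ∀ r ∈ Ioo 0 R₀, r * deriv g r / (Real.exp (g r) - 1) = 2 := by
  intro r hr
  have h1 := hVC r hr
  have h2 := hK r hr
  have ha : deriv f r ≠ 0 := hf'ne r hr
  have hE : Real.exp (g r) - 1 ≠ 0 := by
    have := hgt r hr; linarith
  have hrne : r ≠ 0 := ne_of_gt hr.1
  field_simp at h2 ⊢
  have key : deriv f r * (2 * (Real.exp (g r) - 1) - r * deriv g r) = 0 := by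
    linear_combination r * h2 + (Real.exp (g r) - 1) * h1
  rcases mul_eq_zero.1 key with h | h
  · exact absurd h ha
  · linarith
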